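/- For all real numbers t and s: the almost complex structure J on 𝔫'_{t,s} is integrable (N_J ≡ 0), the inner product g making e₁,…,e₆ orthonormal is compatible with J, and the resulting Hermitian structure (J,g) is strong KT. -/

import Mathlib

theorem basis_lin_vanish {L M : Type} [AddCommGroup L] [Module ℝ L] [AddCommGroup M] [Module ℝ M]
    (e : Module.Basis (Fin 6) ℝ L) (f : L → M)
    (hadd : ∀ a b, f (a + b) = f a + f b)
    (hsmul : ∀ (r : ℝ) (a : L), f (r • a) = r • f a)
    (hb : ∀ i, f (e i) = 0) : ∀ x, f x = 0 := by
  have h0 : f 0 = 0 := by simpa using hsmul 0 0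
  intro x
  have hx : x ∈ Submodule.span ℝ (Set.range e) := by rw [e.span_eq]; trivial
  induction hx using Submodule.span_induction with
  | mem a ha => obtain ⟨i, rfl⟩ := ha; exact hb i
  | zero => exact h0
  | add a b _ _ ha hb => rw [hadd, ha, hb, add_zero]
  | smul r a _ ha => rw [hsmul, ha, smul_zero]

theorem basis_bilin_vanish {L M : Type} [AddCommGroup L] [Module ℝ L] [AddCommGroup M] [Module ℝ M]
    (e : Module.Basis (Fin 6) ℝ L) (f : L → L → M)
    (h1a : ∀ a b y, f (a + b) y = f a y + f b y)
    (h1s : ∀ (r : ℝ) (a y : L), f (r • a) y = r • f a y)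
    (h2a : ∀ x a b, f x (a + b) = f x a + f x b)
    (h2s : ∀ (r : ℝ) (x a : L), f x (r • a) = r • f x a)
    (hb : ∀ i j, f (e i) (e j) = 0) : ∀ x y, f x y = 0 := by
  have hcol : ∀ j x, f x (e j) = 0 := fun j =>
    basis_lin_vanish e (fun x => f x (e j)) (fun a b => h1a a b (e j))
      (fun r a => h1s r a (e j)) (fun i => hb i j)
  intro x
  exact basis_lin_vanish e (f x) (h2a x) (fun r a => h2s r x a) (fun j => hcol j x)



/-- The Chevalley–Eilenberg differential of a `2`-form `F` on a real Lie algebra. -/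
def dTwoForm {L : Type} [LieRing L] (F : L → L → ℝ) (x y z : L) : ℝ :=
  -F ⁅x, y⁆ z + F ⁅x, z⁆ y - F ⁅y, z⁆ x

/-- The Chevalley–Eilenberg differential of a `3`-form `τ` on a real Lie algebra. -/
def dThreeForm {L : Type} [LieRing L] (τ : L → L → L → ℝ) (x y z w : L) : ℝ :=
  -τ ⁅x, y⁆ z w + τ ⁅x, z⁆ y w - τ ⁅x, w⁆ y z - τ ⁅y, z⁆ x w + τ ⁅y, w⁆ x z - τ ⁅z, w⁆ x y

/-- `(J, g)` is strong Kähler with torsion: the `3`-form `τ(x,y,z) = −(dF)(Jx,Jy,Jz)`,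
where `F(x,y) = g(Jx,y)` is the fundamental `2`-form, is closed, i.e. `dτ = 0`. -/
def IsStrongKT {L : Type} [LieRing L] [LieAlgebra ℝ L]
    (J : L →ₗ[ℝ] L) (g : L →ₗ[ℝ] L →ₗ[ℝ] ℝ) : Prop :=
  ∀ x y z w : L,
    dThreeForm (fun a b c => -(dTwoForm (fun p q => g (J p) q) (J a) (J b) (J c))) x y z w = 0

set_option maxHeartbeats 4000000 in
/-- For all real numbers `t` and `s`: on the Lie algebra `𝔫'_{t,s}` (with basis `e₁, …, e₆` and
only nonzero brackets `[e₁,e₂] = −t² e₆`, `[e₁,e₄] = −ts e₆`, `[e₂,e₃] = ts e₆`,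
`[e₃,e₄] = −s² e₆`), the almost complex structure `J` (with `Je₁ = e₂`, `Je₂ = −e₁`,
`Je₃ = e₄`, `Je₄ = −e₃`, `Je₅ = e₆`, `Je₆ = −e₅`) is integrable (its Nijenhuis tensor
vanishes), the inner product `g` making `e₁, …, e₆` orthonormal is compatible with `J`,
and the resulting Hermitian structure `(J,g)` is strong KT. -/
theorem nts'_integrable_compatible_strongKT (t s : ℝ)
    (L : Type) [LieRing L] [LieAlgebra ℝ L] (e : Module.Basis (Fin 6) ℝ L)
    (h01 : ⁅e 0, e 1⁆ = (-(t^2)) • e 5) (h03 : ⁅e 0, e 3⁆ = (-(t*s)) • e 5)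
    (h12 : ⁅e 1, e 2⁆ = (t*s) • e 5) (h23 : ⁅e 2, e 3⁆ = (-(s^2)) • e 5)
    (h02 : ⁅e 0, e 2⁆ = 0) (h13 : ⁅e 1, e 3⁆ = 0)
    (h04 : ⁅e 0, e 4⁆ = 0) (h05 : ⁅e 0, e 5⁆ = 0)
    (h14 : ⁅e 1, e 4⁆ = 0) (h15 : ⁅e 1, e 5⁆ = 0)
    (h24 : ⁅e 2, e 4⁆ = 0) (h25 : ⁅e 2, e 5⁆ = 0)
    (h34 : ⁅e 3, e 4⁆ = 0) (h35 : ⁅e 3, e 5⁆ = 0)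
    (h45 : ⁅e 4, e 5⁆ = 0)
    (J : L →ₗ[ℝ] L)
    (hJ0 : J (e 0) = e 1) (hJ1 : J (e 1) = -e 0)
    (hJ2 : J (e 2) = e 3) (hJ3 : J (e 3) = -e 2)
    (hJ4 : J (e 4) = e 5) (hJ5 : J (e 5) = -e 4)
    (g : L →ₗ[ℝ] L →ₗ[ℝ] ℝ)
    (hsymm : ∀ x y : L, g x y = g y x)
    (horth : ∀ i j : Fin 6, g (e i) (e j) = if i = j then 1 else 0) :
    (∀ x y : L, ⁅J x, J y⁆ - ⁅x, y⁆ - J ⁅J x, y⁆ - J ⁅x, J y⁆ = 0) ∧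
    (∀ x y : L, g (J x) (J y) = g x y) ∧
    IsStrongKT J g := by
  -- reversed bracket relations
  have h10 : ⁅e 1, e 0⁆ = (t^2) • e 5 := by rw [← lie_skew, h01, neg_smul, neg_neg]
  have h30 : ⁅e 3, e 0⁆ = (t*s) • e 5 := by rw [← lie_skew, h03, neg_smul, neg_neg]
  have h21 : ⁅e 2, e 1⁆ = (-(t*s)) • e 5 := by rw [← lie_skew, h12, neg_smul]
  have h32 : ⁅e 3, e 2⁆ = (s^2) • e 5 := by rw [← lie_skew, h23, neg_smul, neg_neg]
  have h20 : ⁅e 2, e 0⁆ = 0 := by rw [← lie_skew, h02, neg_zero]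
  have h31 : ⁅e 3, e 1⁆ = 0 := by rw [← lie_skew, h13, neg_zero]
  have h40 : ⁅e 4, e 0⁆ = 0 := by rw [← lie_skew, h04, neg_zero]
  have h50 : ⁅e 5, e 0⁆ = 0 := by rw [← lie_skew, h05, neg_zero]
  have h41 : ⁅e 4, e 1⁆ = 0 := by rw [← lie_skew, h14, neg_zero]
  have h51 : ⁅e 5, e 1⁆ = 0 := by rw [← lie_skew, h15, neg_zero]
  have h42 : ⁅e 4, e 2⁆ = 0 := by rw [← lie_skew, h24, neg_zero]
  have h52 : ⁅e 5, e 2⁆ = 0 := by rw [← lie_skew, h25, neg_zero]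
  have h43 : ⁅e 4, e 3⁆ = 0 := by rw [← lie_skew, h34, neg_zero]
  have h53 : ⁅e 5, e 3⁆ = 0 := by rw [← lie_skew, h35, neg_zero]
  have h54 : ⁅e 5, e 4⁆ = 0 := by rw [← lie_skew, h45, neg_zero]
  -- the bracket in terms of two linear functionals
  have hbr0 : ∀ x y : L,
      ⁅x, y⁆ - ((t * g (e 0) x + s * g (e 2) x) * (-(t * g (e 1) y) - s * g (e 3) y)
        - (t * g (e 0) y + s * g (e 2) y) * (-(t * g (e 1) x) - s * g (e 3) x)) • e 5 = 0 := by
    apply basis_bilin_vanish e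
    · intro a b y
      simp only [add_lie, map_add]
      module
    · intro r a y
      simp only [smul_lie, map_smul, smul_eq_mul]
      module
    · intro x a b
      simp only [lie_add, map_add]
      module
    · intro r x a
      simp only [lie_smul, map_smul, smul_eq_mul]
      module
    · intro i j
      fin_cases i <;> fin_cases j <;>
        simp [h01, h03, h12, h23, h02, h13, h04, h05, h14, h15, h24, h25, h34, h35, h45,
          h10, h30, h21, h32, h20, h31, h40, h50, h41, h51, h42, h52, h43, h53, h54, horth] <;>
        module
  have hbr : ∀ x y : L,
      ⁅x, y⁆ = ((t * g (e 0) x + s * g (e 2) x) * (-(t * g (e 1) y) - s * g (e 3) y)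
        - (t * g (e 0) y + s * g (e 2) y) * (-(t * g (e 1) x) - s * g (e 3) x)) • e 5 :=
    fun x y => sub_eq_zero.mp (hbr0 x y)
  -- coordinates of J
  have hgJlin : ∀ (i j : Fin 6) (sg : ℝ),
      (∀ x, g (e i) (J x) - sg * g (e j) x = 0) → ∀ x, g (e i) (J x) = sg * g (e j) x := by
    intro i j sg h x; have := h x; linarith
  have hg0J : ∀ x : L, g (e 0) (J x) = -(g (e 1) x) := by
    intro x
    have h := basis_lin_vanish e (fun x => g (e 0) (J x) + g (e 1) x)
      (by intro a b; simp only [map_add]; ring)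
      (by intro r a; simp only [map_smul, smul_eq_mul]; ring)
      (by intro i; fin_cases i <;> simp [hJ0, hJ1, hJ2, hJ3, hJ4, hJ5, horth]) x
    linarith
  have hg1J : ∀ x : L, g (e 1) (J x) = g (e 0) x := by
    intro x
    have h := basis_lin_vanish e (fun x => g (e 1) (J x) - g (e 0) x)
      (by intro a b; simp only [map_add]; ring)
      (by intro r a; simp only [map_smul, smul_eq_mul]; ring)
      (by intro i; fin_cases i <;> simp [hJ0, hJ1, hJ2, hJ3, hJ4, hJ5, horth]) x
    linarith
  have hg2J : ∀ x : L, g (e 2) (J x) = -(g (e 3) x) := by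
    intro x
    have h := basis_lin_vanish e (fun x => g (e 2) (J x) + g (e 3) x)
      (by intro a b; simp only [map_add]; ring)
      (by intro r a; simp only [map_smul, smul_eq_mul]; ring)
      (by intro i; fin_cases i <;> simp [hJ0, hJ1, hJ2, hJ3, hJ4, hJ5, horth]) x
    linarith
  have hg3J : ∀ x : L, g (e 3) (J x) = g (e 2) x := by
    intro x
    have h := basis_lin_vanish e (fun x => g (e 3) (J x) - g (e 2) x)
      (by intro a b; simp only [map_add]; ring)
      (by intro r a; simp only [map_smul, smul_eq_mul]; ring)
      (by intro i; fin_cases i <;> simp [hJ0, hJ1, hJ2, hJ3, hJ4, hJ5, horth]) x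
    linarith
  have hg4J : ∀ x : L, g (e 4) (J x) = -(g (e 5) x) := by
    intro x
    have h := basis_lin_vanish e (fun x => g (e 4) (J x) + g (e 5) x)
      (by intro a b; simp only [map_add]; ring)
      (by intro r a; simp only [map_smul, smul_eq_mul]; ring)
      (by intro i; fin_cases i <;> simp [hJ0, hJ1, hJ2, hJ3, hJ4, hJ5, horth]) x
    linarith
  have hg5J : ∀ x : L, g (e 5) (J x) = g (e 4) x := by
    intro x
    have h := basis_lin_vanish e (fun x => g (e 5) (J x) - g (e 4) x)
      (by intro a b; simp only [map_add]; ring)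
      (by intro r a; simp only [map_smul, smul_eq_mul]; ring)
      (by intro i; fin_cases i <;> simp [hJ0, hJ1, hJ2, hJ3, hJ4, hJ5, horth]) x
    linarith
  refine ⟨?_, ?_, ?_⟩
  · -- Nijenhuis
    intro x y
    rw [hbr (J x) (J y), hbr x y, hbr (J x) y, hbr x (J y)]
    simp only [map_smul, hJ5, hg0J, hg1J, hg2J, hg3J, hg4J, hg5J]
    module
  · -- compatibility
    intro x y
    have h := basis_bilin_vanish e (fun x y => g (J x) (J y) - g x y)
      (by intro a b y; simp only [map_add, LinearMap.add_apply]; ring)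
      (by intro r a y; simp only [map_smul, LinearMap.smul_apply, smul_eq_mul]; ring)
      (by intro x a b; simp only [map_add]; ring)
      (by intro r x a; simp only [map_smul, smul_eq_mul]; ring)
      (by intro i j; fin_cases i <;> fin_cases j <;>
        simp [hJ0, hJ1, hJ2, hJ3, hJ4, hJ5, horth]) x y
    linarith
  · -- strong KT
    intro x y z w
    simp only [dThreeForm, dTwoForm]
    simp only [hbr, map_smul, hJ5, map_neg, LinearMap.neg_apply, LinearMap.smul_apply,
      smul_eq_mul, hg0J, hg1J, hg2J, hg3J, hg4J, hg5J, horth]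
    ring
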